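/- Let L > 0, and let x, y be real with |y| < arcsin((2/π)·arcsin(e^{−L/2})). Then |1 + exp(−L − π·sinh(x + iy))| ≥ (1 + exp(−L − π·sinh(x)·cos y))·√(1 − e^L·sin²((π/2)·sin y)). -/

import Mathlib

open Complex Real

/-- Jordan-type inequality: `u cos u ≤ (π²/4 − u²) sin u` on `[0, π/2]`. -/
lemma aux_ucos_aux (v : ℝ) (hv0 : 0 ≤ v) (hv2 : v ≤ π / 2) :
    (π / 2 - v) * Real.sin v ≤ v * (π - v) * Real.cos v := by
  have hπ : (0:ℝ) < π := Real.pi_pos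
  have hsv : Real.sin v ≤ v := Real.sin_le hv0
  have hcv : 2 / π * (π / 2 - v) ≤ Real.cos v := by
    rw [← Real.sin_pi_div_two_sub]
    exact Real.mul_le_sin (by linarith) (by linarith)
  have h1 : (π / 2 - v) * Real.sin v ≤ (π / 2 - v) * v :=
    mul_le_mul_of_nonneg_left hsv (by linarith)
  have h2 : (π / 2 - v) * v ≤ v * (π - v) * (2 / π * (π / 2 - v)) := by
    have hkey : v * (π - v) * (2 / π * (π / 2 - v)) - (π / 2 - v) * v
        = (π / 2 - v) * v * (π - 2 * v) / π := by
      field_simp; ring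
    have hnn : 0 ≤ (π / 2 - v) * v * (π - 2 * v) / π := by
      apply div_nonneg _ hπ.le
      exact mul_nonneg (mul_nonneg (by linarith) hv0) (by linarith)
    linarith
  have h3 : v * (π - v) * (2 / π * (π / 2 - v)) ≤ v * (π - v) * Real.cos v := by
    have hπv : 0 ≤ v * (π - v) := mul_nonneg hv0 (by linarith)
    exact mul_le_mul_of_nonneg_left hcv hπv
  linarith

lemma aux_ucos (u : ℝ) (h0 : 0 ≤ u) (h2 : u ≤ π / 2) :
    u * Real.cos u ≤ (π ^ 2 / 4 - u ^ 2) * Real.sin u := by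
  have hπ : (0:ℝ) < π := Real.pi_pos
  have h := aux_ucos_aux (π / 2 - u) (by linarith) (by linarith)
  rw [show π / 2 - (π / 2 - u) = u by ring] at h
  rw [Real.sin_pi_div_two_sub, Real.cos_pi_div_two_sub] at h
  calc u * Real.cos u ≤ (π / 2 - u) * (π - (π / 2 - u)) * Real.sin u := h
    _ = (π ^ 2 / 4 - u ^ 2) * Real.sin u := by ring

/-- `|sin(cu)| ≤ sin u + (c−1) u cos u` for `u ∈ [0, π/2]`, `c ≥ 1`. -/
lemma aux_sin_cu (u c : ℝ) (h0 : 0 ≤ u) (h2 : u ≤ π / 2) (hc : 1 ≤ c) :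
    |Real.sin (c * u)| ≤ Real.sin u + (c - 1) * u * Real.cos u := by
  have hsu : 0 ≤ Real.sin u :=
    Real.sin_nonneg_of_nonneg_of_le_pi h0 (by linarith [Real.pi_pos])
  have hcu : 0 ≤ Real.cos u :=
    Real.cos_nonneg_of_mem_Icc ⟨by linarith [Real.pi_pos], h2⟩
  have hw : 0 ≤ (c - 1) * u := mul_nonneg (by linarith) h0
  have hrw : c * u = u + (c - 1) * u := by ring
  rw [hrw, Real.sin_add]
  calc |Real.sin u * Real.cos ((c-1)*u) + Real.cos u * Real.sin ((c-1)*u)|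
      ≤ |Real.sin u * Real.cos ((c-1)*u)| + |Real.cos u * Real.sin ((c-1)*u)| := abs_add_le _ _
    _ ≤ Real.sin u * 1 + Real.cos u * ((c-1)*u) := by
        rw [abs_mul, abs_mul, _root_.abs_of_nonneg hsu, _root_.abs_of_nonneg hcu]
        gcongr
        · exact Real.abs_cos_le_one _
        · exact Real.abs_sin_le_abs.trans (le_of_eq (abs_of_nonneg hw))
    _ = Real.sin u + (c - 1) * u * Real.cos u := by ring

/-- `1 + K²/2 ≤ cosh K`. -/
lemma aux_cosh_lb (K : ℝ) : 1 + K ^ 2 / 2 ≤ Real.cosh K := by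
  have h : ∀ w : ℝ, 0 ≤ w → 1 + w ^ 2 / 2 ≤ Real.cosh w := by
    intro w hw
    have h1 : w / 2 ≤ Real.sinh (w / 2) := Real.self_le_sinh_iff.2 (by linarith)
    have h2 : Real.cosh w = 2 * Real.sinh (w / 2) ^ 2 + 1 := by
      rw [show w = 2 * (w / 2) by ring, Real.cosh_two_mul, Real.cosh_sq]; ring
    nlinarith
  have := h |K| (abs_nonneg K)
  rwa [Real.cosh_abs, _root_.sq_abs] at this

/-- `cosh q ≤ e^{p} cosh (p + q)` for `p ≥ 0`. -/
lemma aux_cosh_shift (p q : ℝ) (hp : 0 ≤ p) :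
    Real.cosh q ≤ Real.exp p * Real.cosh (p + q) := by
  rw [Real.cosh_add]
  have hsp : 0 ≤ Real.sinh p := by
    rw [← Real.sinh_zero]; exact Real.sinh_le_sinh.2 hp
  have h1 : Real.sinh q + Real.cosh q = Real.exp q := Real.sinh_add_cosh q
  have h2 : Real.cosh p - Real.sinh p = Real.exp (-p) := Real.cosh_sub_sinh p
  have h7 : Real.exp p * (Real.cosh p - Real.sinh p) = 1 := by
    rw [h2, ← Real.exp_add]; simp
  have hkey : Real.exp p * (Real.cosh p * Real.cosh q + Real.sinh p * Real.sinh q)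
      = Real.cosh q + Real.exp p * Real.sinh p * Real.exp q := by
    linear_combination Real.cosh q * h7 + (Real.exp p * Real.sinh p) * h1
  rw [hkey]
  have : 0 ≤ Real.exp p * Real.sinh p * Real.exp q :=
    mul_nonneg (mul_nonneg (Real.exp_pos p).le hsp) (Real.exp_pos q).le
  linarith

set_option maxHeartbeats 1000000 in
/-- The key scalar inequality. -/
lemma aux_key (L x y : ℝ) (hL : 0 ≤ L) :
    Real.sin (π / 2 * (Real.cosh x * Real.sin y)) ^ 2 ≤
      Real.exp L * Real.sin (π / 2 * Real.sin y) ^ 2 *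
        Real.cosh ((L + π * Real.sinh x * Real.cos y) / 2) ^ 2 := by
  have hπ : (0:ℝ) < π := Real.pi_pos
  set t : ℝ := |Real.sin y| with ht
  set u : ℝ := π / 2 * t with hu
  have ht0 : 0 ≤ t := abs_nonneg _
  have ht1 : t ≤ 1 := by
    rw [ht]; exact abs_le.2 ⟨Real.neg_one_le_sin y, Real.sin_le_one y⟩
  have hu0 : 0 ≤ u := by positivity
  have hu2 : u ≤ π / 2 := by
    rw [hu]
    calc π / 2 * t ≤ π / 2 * 1 := by
          apply mul_le_mul_of_nonneg_left ht1 (by positivity)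
      _ = π / 2 := mul_one _
  set c : ℝ := Real.cosh x with hcdef
  have hc : 1 ≤ c := Real.one_le_cosh x
  set K : ℝ := π / 2 * (Real.sinh x * Real.cos y) with hK
  -- rewrite both sines in terms of u
  have e1 : Real.sin (π / 2 * (Real.cosh x * Real.sin y)) ^ 2 = Real.sin (c * u) ^ 2 := by
    rcases abs_cases (Real.sin y) with ⟨h, _⟩ | ⟨h, _⟩
    · have : c * u = π / 2 * (c * Real.sin y) := by rw [hu, ht, h]; ring
      rw [this]
    · have : c * u = -(π / 2 * (c * Real.sin y)) := by rw [hu, ht, h]; ring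
      rw [this, Real.sin_neg, neg_sq]
  have e2 : Real.sin (π / 2 * Real.sin y) ^ 2 = Real.sin u ^ 2 := by
    rcases abs_cases (Real.sin y) with ⟨h, _⟩ | ⟨h, _⟩
    · have : u = π / 2 * Real.sin y := by rw [hu, ht, h]
      rw [this]
    · have : u = -(π / 2 * Real.sin y) := by rw [hu, ht, h]; ring
      rw [this, Real.sin_neg, neg_sq]
  rw [e1, e2]
  have hsu : 0 ≤ Real.sin u :=
    Real.sin_nonneg_of_nonneg_of_le_pi hu0 (by linarith)
  have hA := aux_sin_cu u c hu0 hu2 hc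
  have hB := aux_ucos u hu0 hu2
  have hγ : π ^ 2 / 4 - u ^ 2 = π ^ 2 / 4 * Real.cos y ^ 2 := by
    have h1 : u ^ 2 = π ^ 2 / 4 * Real.sin y ^ 2 := by
      rw [hu, ht, mul_pow, _root_.sq_abs]; ring
    have h2 := Real.sin_sq_add_cos_sq y
    nlinarith [h1, h2]
  have hK2 : K ^ 2 = π ^ 2 / 4 * ((c ^ 2 - 1) * Real.cos y ^ 2) := by
    have h1 : Real.sinh x ^ 2 = c ^ 2 - 1 := by
      have := Real.cosh_sq x; rw [← hcdef] at this; linarith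
    rw [hK, mul_pow, mul_pow, h1]; ring
  have hchain : |Real.sin (c * u)| ≤ Real.sin u * Real.cosh K := by
    have h1 : (c - 1) * (u * Real.cos u) ≤ (c - 1) * ((π ^ 2 / 4 * Real.cos y ^ 2) * Real.sin u) := by
      apply mul_le_mul_of_nonneg_left _ (by linarith)
      rw [← hγ]; exact hB
    have h2 : 1 + (c - 1) * (π ^ 2 / 4 * Real.cos y ^ 2) ≤ 1 + K ^ 2 / 2 := by
      rw [hK2]
      nlinarith [mul_nonneg (mul_nonneg (by positivity : (0:ℝ) ≤ π ^ 2 / 8)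
        (sq_nonneg (c - 1))) (sq_nonneg (Real.cos y))]
    have h2' : Real.sin u * (1 + (c - 1) * (π ^ 2 / 4 * Real.cos y ^ 2)) ≤
        Real.sin u * (1 + K ^ 2 / 2) := mul_le_mul_of_nonneg_left h2 hsu
    have h3 : Real.sin u * (1 + K ^ 2 / 2) ≤ Real.sin u * Real.cosh K :=
      mul_le_mul_of_nonneg_left (aux_cosh_lb K) hsu
    linarith [hA, h1, h2', h3]
  have hshift : Real.cosh K ≤ Real.exp (L / 2) * Real.cosh (L / 2 + K) :=
    aux_cosh_shift (L / 2) K (by linarith)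
  have hfinal : |Real.sin (c * u)| ≤
      Real.sin u * (Real.exp (L / 2) * Real.cosh (L / 2 + K)) :=
    hchain.trans (mul_le_mul_of_nonneg_left hshift hsu)
  have harg : (L + π * Real.sinh x * Real.cos y) / 2 = L / 2 + K := by rw [hK]; ring
  have hexp : Real.exp (L / 2) * Real.exp (L / 2) = Real.exp L := by
    rw [← Real.exp_add]; congr 1; ring
  calc Real.sin (c * u) ^ 2 = |Real.sin (c * u)| ^ 2 := (_root_.sq_abs _).symm
    _ ≤ (Real.sin u * (Real.exp (L / 2) * Real.cosh (L / 2 + K))) ^ 2 := by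
        apply pow_le_pow_left₀ (abs_nonneg _) hfinal
    _ = Real.exp L * Real.sin u ^ 2 * Real.cosh ((L + π * Real.sinh x * Real.cos y) / 2) ^ 2 := by
        rw [harg, ← hexp]; ring

set_option maxHeartbeats 1000000 in
theorem abs_one_add_exp_neg_L_ge (L x y : ℝ) (hL : 0 < L)
    (hy : |y| < Real.arcsin ((2 / π) * Real.arcsin (Real.exp (-L / 2)))) :
    ‖(1 + Complex.exp (-L - π * Complex.sinh (x + y * Complex.I)))‖
      ≥ (1 + Real.exp (-L - π * Real.sinh x * Real.cos y)) *
        Real.sqrt (1 - Real.exp L * Real.sin (π / 2 * Real.sin y) ^ 2) := by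
  have hπ : (0:ℝ) < π := Real.pi_pos
  set a : ℝ := -L - π * Real.sinh x * Real.cos y with ha
  set b : ℝ := -(π * (Real.cosh x * Real.sin y)) with hb
  set s : ℝ := Real.sin (π / 2 * Real.sin y) with hs
  have hz : (-L - π * Complex.sinh (x + y * Complex.I) : ℂ)
      = Complex.ofReal a + Complex.ofReal b * Complex.I := by
    have h1 : Complex.sinh (x + y * Complex.I) =
        Complex.ofReal (Real.sinh x * Real.cos y)
          + Complex.ofReal (Real.cosh x * Real.sin y) * Complex.I := by
      rw [Complex.sinh_add, Complex.sinh_mul_I, Complex.cosh_mul_I]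
      push_cast
      ring
    rw [h1, ha, hb]
    push_cast
    ring
  have hzre : (-L - π * Complex.sinh (x + y * Complex.I) : ℂ).re = a := by
    rw [hz]; simp
  have hzim : (-L - π * Complex.sinh (x + y * Complex.I) : ℂ).im = b := by
    rw [hz]; simp
  -- key inequality
  have key : Real.sin (b / 2) ^ 2 ≤ Real.exp L * s ^ 2 * Real.cosh (a / 2) ^ 2 := by
    have h := aux_key L x y hL.le
    have harg : (L + π * Real.sinh x * Real.cos y) / 2 = -(a / 2) := by rw [ha]; ring
    rw [harg, Real.cosh_neg] at h
    have hb2 : Real.sin (b / 2) ^ 2 = Real.sin (π / 2 * (Real.cosh x * Real.sin y)) ^ 2 := by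
      have : b / 2 = -(π / 2 * (Real.cosh x * Real.sin y)) := by rw [hb]; ring
      rw [this, Real.sin_neg, neg_sq]
    rw [hb2, hs]
    exact h
  -- the identity (1+e^a)² = 4 e^a cosh²(a/2)
  have hid : (1 + Real.exp a) ^ 2 = 4 * Real.exp a * Real.cosh (a / 2) ^ 2 := by
    have h1 : Real.exp (a / 2) ^ 2 = Real.exp a := by
      rw [sq, ← Real.exp_add]; ring_nf
    have h0 : Real.exp (a / 2) ≠ 0 := (Real.exp_pos _).ne'
    rw [Real.cosh_eq, Real.exp_neg, ← h1]
    field_simp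
    ring
  rcases le_or_gt (1 - Real.exp L * s ^ 2) 0 with hM | hM
  · rw [Real.sqrt_eq_zero'.2 hM, mul_zero]
    exact norm_nonneg _
  · have habs : ‖(1 + Complex.exp (-L - π * Complex.sinh (x + y * Complex.I)))‖
        = Real.sqrt ((1 + Real.exp a * Real.cos b) ^ 2 + (Real.exp a * Real.sin b) ^ 2) := by
      rw [Complex.norm_def, Complex.normSq_apply]
      have h1 : (1 + Complex.exp (-L - π * Complex.sinh (x + y * Complex.I))).re
          = 1 + Real.exp a * Real.cos b := by
        simp [Complex.exp_re, hzre, hzim]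
      have h2 : (1 + Complex.exp (-L - π * Complex.sinh (x + y * Complex.I))).im
          = Real.exp a * Real.sin b := by
        simp [Complex.exp_im, hzre, hzim]
      rw [h1, h2]
      congr 1
      ring
    have hEpos : (0:ℝ) < 1 + Real.exp a := by positivity
    have hrhs : (1 + Real.exp a) * Real.sqrt (1 - Real.exp L * s ^ 2)
        = Real.sqrt ((1 + Real.exp a) ^ 2 * (1 - Real.exp L * s ^ 2)) := by
      rw [Real.sqrt_mul (sq_nonneg _), Real.sqrt_sq hEpos.le]
    rw [ge_iff_le, hrhs, habs]
    apply Real.sqrt_le_sqrt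
    have hcb : Real.cos b = 1 - 2 * Real.sin (b / 2) ^ 2 := by
      have hpc := Real.sin_sq_add_cos_sq (b / 2)
      have h2 : Real.cos b = 2 * Real.cos (b / 2) ^ 2 - 1 := by
        have := Real.cos_two_mul (b / 2)
        rw [show 2 * (b / 2) = b by ring] at this
        exact this
      linarith
    have hkey2 : 4 * Real.exp a * Real.sin (b / 2) ^ 2
        ≤ Real.exp L * s ^ 2 * (1 + Real.exp a) ^ 2 := by
      calc 4 * Real.exp a * Real.sin (b / 2) ^ 2
          ≤ 4 * Real.exp a * (Real.exp L * s ^ 2 * Real.cosh (a / 2) ^ 2) := by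
            apply mul_le_mul_of_nonneg_left key (by positivity)
        _ = Real.exp L * s ^ 2 * (4 * Real.exp a * Real.cosh (a / 2) ^ 2) := by ring
        _ = Real.exp L * s ^ 2 * (1 + Real.exp a) ^ 2 := by rw [← hid]
    have h1 : (Real.exp a) ^ 2 * (Real.sin b ^ 2 + Real.cos b ^ 2)
        = (Real.exp a) ^ 2 * 1 := by rw [Real.sin_sq_add_cos_sq]
    have h2 : Real.exp a * Real.cos b = Real.exp a * (1 - 2 * Real.sin (b / 2) ^ 2) := by
      rw [← hcb]
    nlinarith [hkey2, h1, h2]
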